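/- arXiv:math/0208111 — 3 statements merged into one kernel-verified Lean document; each statement's English description precedes it below -/
import Mathlib

section
/- Let w ∈ L^1(0,1) with w ≥ 0 and ∫₀¹ w(x) dx < 1. Suppose f and g are nonnegative bounded functions on (0,∞) satisfying f(t) ≤ g(t) + ∫₀¹ w(τ) f(τt) dτ for all t > 0. If g(t) → 0 as t → ∞, then f(t) → 0 as t → ∞. -/
open MeasureTheory

/-- If `w ∈ L¹(0,1)`, `w ≥ 0`, `∫₀¹ w < 1`, and `f`, `g` are nonnegative bounded
functions on `(0,∞)` with `f(t) ≤ g(t) + ∫₀¹ w(τ) f(τ t) dτ`, then `g(t) → 0` as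
`t → ∞` implies `f(t) → 0` as `t → ∞`. -/
theorem stmt2 (w f g : ℝ → ℝ)
    (hw_int : IntegrableOn w (Set.Ioo 0 1))
    (hw_nonneg : ∀ x ∈ Set.Ioo (0 : ℝ) 1, 0 ≤ w x)
    (hw_lt : (∫ x in Set.Ioo (0 : ℝ) 1, w x) < 1)
    (hf_nonneg : ∀ t : ℝ, 0 < t → 0 ≤ f t)
    (hg_nonneg : ∀ t : ℝ, 0 < t → 0 ≤ g t)
    (hf_bdd : ∃ M : ℝ, ∀ t : ℝ, 0 < t → f t ≤ M)
    (hg_bdd : ∃ M : ℝ, ∀ t : ℝ, 0 < t → g t ≤ M)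
    (hineq : ∀ t : ℝ, 0 < t → f t ≤ g t + ∫ τ in Set.Ioo (0 : ℝ) 1, w τ * f (τ * t))
    (hg : Filter.Tendsto g Filter.atTop (nhds 0)) :
    Filter.Tendsto f Filter.atTop (nhds 0) := by
  obtain ⟨M, hM⟩ := hf_bdd
  set M0 : ℝ := max M 0 with hM0def
  have hM0 : ∀ t : ℝ, 0 < t → f t ≤ M0 := fun t ht => (hM t ht).trans (le_max_left _ _)
  have hM0nn : (0:ℝ) ≤ M0 := le_max_right _ _
  set c : ℝ := ∫ x in Set.Ioo (0:ℝ) 1, w x with hcdef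
  have hc0 : 0 ≤ c := setIntegral_nonneg measurableSet_Ioo hw_nonneg
  have hc1 : c < 1 := hw_lt
  have hw_ae : 0 ≤ᵐ[volume.restrict (Set.Ioo (0:ℝ) 1)] w :=
    (ae_restrict_iff' measurableSet_Ioo).2 (Filter.Eventually.of_forall hw_nonneg)
  -- split of the integral at δ
  have hsplit : ∀ δ : ℝ, 0 < δ → δ < 1 →
      (∫ x in Set.Ioo (0:ℝ) δ, w x) + (∫ x in Set.Ico δ 1, w x) = c := by
    intro δ hδ0 hδ1
    have hsets : Set.Ioo (0:ℝ) 1 = Set.Ioo 0 δ ∪ Set.Ico δ 1 := by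
      ext x
      simp only [Set.mem_union, Set.mem_Ioo, Set.mem_Ico]
      constructor
      · rintro ⟨h1, h2⟩
        rcases lt_or_ge x δ with h | h
        · exact Or.inl ⟨h1, h⟩
        · exact Or.inr ⟨h, h2⟩
      · rintro (⟨h1, h2⟩ | ⟨h1, h2⟩)
        · exact ⟨h1, h2.trans hδ1⟩
        · exact ⟨hδ0.trans_le h1, h2⟩
    have hdisj : Disjoint (Set.Ioo (0:ℝ) δ) (Set.Ico δ 1) := by
      rw [Set.disjoint_left]
      rintro x ⟨_, h2⟩ ⟨h3, _⟩
      exact absurd h3 (not_le.2 h2)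
    rw [hcdef, hsets, setIntegral_union hdisj measurableSet_Ico
      (hw_int.mono_set (by rw [hsets]; exact Set.subset_union_left))
      (hw_int.mono_set (by rw [hsets]; exact Set.subset_union_right))]
  -- small tails
  have hδex : ∀ η : ℝ, 0 < η → ∃ δ : ℝ, 0 < δ ∧ δ < 1 ∧ (∫ x in Set.Ioo (0:ℝ) δ, w x) < η := by
    intro η hη
    set s : ℕ → Set ℝ := fun n => Set.Ico ((n + 2 : ℝ)⁻¹) 1 with hs
    have hmono : Monotone s := by
      intro n m hnm x hx
      refine ⟨le_trans ?_ hx.1, hx.2⟩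
      apply inv_anti₀
      · positivity
      · push_cast; have := (Nat.cast_le (α := ℝ)).2 hnm; linarith
    have hunion : (⋃ n, s n) = Set.Ioo (0:ℝ) 1 := by
      ext x
      simp only [Set.mem_iUnion, hs, Set.mem_Ico, Set.mem_Ioo]
      constructor
      · rintro ⟨n, h1, h2⟩
        exact ⟨lt_of_lt_of_le (by positivity) h1, h2⟩
      · rintro ⟨h1, h2⟩
        obtain ⟨n, hn⟩ := exists_nat_gt x⁻¹
        refine ⟨n, ?_, h2⟩
        rw [inv_le_comm₀ (by positivity) h1]
        exact le_trans hn.le (by push_cast; linarith)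
    have hT : Filter.Tendsto (fun n => ∫ x in s n, w x) Filter.atTop (nhds c) := by
      have := tendsto_setIntegral_of_monotone (fun n => measurableSet_Ico) hmono
        (by rw [hunion]; exact hw_int)
      rwa [hunion] at this
    have : ∀ᶠ n in Filter.atTop, c - η < ∫ x in s n, w x :=
      hT.eventually (eventually_gt_nhds (by linarith))
    obtain ⟨n, hn⟩ := this.exists
    refine ⟨(n + 2 : ℝ)⁻¹, by positivity, ?_, ?_⟩
    · rw [inv_lt_one_iff₀]; right; push_cast; linarith
    · have := hsplit ((n + 2 : ℝ)⁻¹) (by positivity)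
        (by rw [inv_lt_one_iff₀]; right; push_cast; linarith)
      have hn' : c - η < ∫ x in Set.Ico ((n + 2 : ℝ)⁻¹) 1, w x := hn
      linarith
  -- key iteration step
  have hstep : ∀ K : ℝ, 0 < K → ∀ a : ℝ, 0 ≤ a →
      (∀ᶠ t in Filter.atTop, f t ≤ a) → (∀ᶠ t in Filter.atTop, f t ≤ c * a + K) := by
    intro K hK a ha hfa
    obtain ⟨δ, hδ0, hδ1, hδw⟩ := hδex (K / (2 * (M0 + 1))) (by positivity)
    obtain ⟨T, hT⟩ := Filter.eventually_atTop.1 hfa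
    have hgev : ∀ᶠ t in Filter.atTop, g t < K / 2 :=
      hg.eventually (eventually_lt_nhds (by positivity))
    obtain ⟨Tg, hTg⟩ := Filter.eventually_atTop.1 hgev
    rw [Filter.eventually_atTop]
    refine ⟨max (max Tg 1) (T / δ), fun t ht => ?_⟩
    have ht1 : (1:ℝ) ≤ t := le_trans (le_trans (le_max_right _ _) (le_max_left _ _)) ht
    have htpos : 0 < t := lt_of_lt_of_le one_pos ht1
    have htT : T / δ ≤ t := le_trans (le_max_right _ _) ht
    have htTg : Tg ≤ t := le_trans (le_trans (le_max_left _ _) (le_max_left _ _)) ht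
    have hgt : g t < K / 2 := hTg t htTg
    have hfle := hineq t htpos
    by_cases hI : IntegrableOn (fun τ => w τ * f (τ * t)) (Set.Ioo (0:ℝ) 1)
    · -- integrable case: split and bound
      have hsub1 : Set.Ioo (0:ℝ) δ ⊆ Set.Ioo (0:ℝ) 1 := fun x hx => ⟨hx.1, hx.2.trans hδ1⟩
      have hsub2 : Set.Ico δ 1 ⊆ Set.Ioo (0:ℝ) 1 := fun x hx => ⟨hδ0.trans_le hx.1, hx.2⟩
      have hsets : Set.Ioo (0:ℝ) 1 = Set.Ioo 0 δ ∪ Set.Ico δ 1 := by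
        ext x
        simp only [Set.mem_union, Set.mem_Ioo, Set.mem_Ico]
        constructor
        · rintro ⟨h1, h2⟩
          rcases lt_or_ge x δ with h | h
          · exact Or.inl ⟨h1, h⟩
          · exact Or.inr ⟨h, h2⟩
        · rintro (⟨h1, h2⟩ | ⟨h1, h2⟩)
          · exact ⟨h1, h2.trans hδ1⟩
          · exact ⟨hδ0.trans_le h1, h2⟩
      have hdisj : Disjoint (Set.Ioo (0:ℝ) δ) (Set.Ico δ 1) := by
        rw [Set.disjoint_left]
        rintro x ⟨_, h2⟩ ⟨h3, _⟩
        exact absurd h3 (not_le.2 h2)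
      have hIsplit : (∫ τ in Set.Ioo (0:ℝ) 1, w τ * f (τ * t)) =
          (∫ τ in Set.Ioo (0:ℝ) δ, w τ * f (τ * t)) + ∫ τ in Set.Ico δ 1, w τ * f (τ * t) := by
        rw [hsets, setIntegral_union hdisj measurableSet_Ico
          (hI.mono_set hsub1) (hI.mono_set hsub2)]
      have hb1 : (∫ τ in Set.Ioo (0:ℝ) δ, w τ * f (τ * t)) ≤
          ∫ τ in Set.Ioo (0:ℝ) δ, w τ * M0 := by
        apply setIntegral_mono_on (hI.mono_set hsub1)
          ((hw_int.mono_set hsub1).mul_const M0) measurableSet_Ioo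
        intro x hx
        have hx1 : x ∈ Set.Ioo (0:ℝ) 1 := hsub1 hx
        exact mul_le_mul_of_nonneg_left (hM0 _ (mul_pos hx.1 htpos)) (hw_nonneg x hx1)
      have hb2 : (∫ τ in Set.Ico δ 1, w τ * f (τ * t)) ≤
          ∫ τ in Set.Ico δ 1, w τ * a := by
        apply setIntegral_mono_on (hI.mono_set hsub2)
          ((hw_int.mono_set hsub2).mul_const a) measurableSet_Ico
        intro x hx
        have hx1 : x ∈ Set.Ioo (0:ℝ) 1 := hsub2 hx
        have hxt : T ≤ x * t := by
          have h1 : T ≤ δ * t := by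
            rw [div_le_iff₀ hδ0] at htT; linarith [htT]
          calc T ≤ δ * t := h1
            _ ≤ x * t := mul_le_mul_of_nonneg_right hx.1 htpos.le
        exact mul_le_mul_of_nonneg_left (hT _ hxt) (hw_nonneg x hx1)
      have hb1' : (∫ τ in Set.Ioo (0:ℝ) δ, w τ * M0) ≤ K / 2 := by
        rw [integral_mul_const]
        calc (∫ τ in Set.Ioo (0:ℝ) δ, w τ) * M0
            ≤ (K / (2 * (M0 + 1))) * M0 := by
              apply mul_le_mul_of_nonneg_right hδw.le hM0nn
          _ ≤ K / 2 := by
              rw [div_mul_eq_mul_div, div_le_div_iff₀ (by positivity) (by norm_num)]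
              nlinarith
      have hb2' : (∫ τ in Set.Ico δ 1, w τ * a) ≤ c * a := by
        rw [integral_mul_const]
        exact mul_le_mul_of_nonneg_right (setIntegral_mono_set hw_int hw_ae
          (HasSubset.Subset.eventuallyLE hsub2)) ha
      calc f t ≤ g t + ∫ τ in Set.Ioo (0:ℝ) 1, w τ * f (τ * t) := hfle
        _ ≤ K / 2 + (K / 2 + c * a) := by
            rw [hIsplit]
            have := le_trans hb1 hb1'
            have := le_trans hb2 hb2'
            linarith
        _ = c * a + K := by ring
    · -- non-integrable case: the integral is zero
      rw [integral_undef hI] at hfle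
      have : 0 ≤ c * a := mul_nonneg hc0 ha
      linarith
  -- conclude via iteration
  rw [tendsto_order]
  constructor
  · intro b hb
    filter_upwards [Filter.eventually_ge_atTop (1:ℝ)] with t ht
    exact lt_of_lt_of_le hb (hf_nonneg t (lt_of_lt_of_le one_pos ht))
  · intro ε hε
    set K : ℝ := ε * (1 - c) / 2 with hKdef
    have hKpos : 0 < K := by
      apply div_pos (mul_pos hε (by linarith)) two_pos
    set L : ℝ := K / (1 - c) with hLdef
    have h1c : (1:ℝ) - c ≠ 0 := by intro h; linarith [hc1]; 
    have hL : L = ε / 2 := by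
      rw [hLdef, hKdef]; field_simp
    have hLc : c * L + K = L := by
      rw [hLdef, hKdef]; field_simp; ring
    set a : ℕ → ℝ := fun n => c ^ n * (M0 - L) + L with hadef
    have hLnn : 0 ≤ L := by rw [hL]; positivity
    have ha : ∀ n, 0 ≤ a n ∧ ∀ᶠ t in Filter.atTop, f t ≤ a n := by
      intro n
      induction n with
      | zero =>
        constructor
        · simp [hadef]; linarith
        · simp only [hadef, pow_zero, one_mul]
          filter_upwards [Filter.eventually_ge_atTop (1:ℝ)] with t ht
          have := hM0 t (lt_of_lt_of_le one_pos ht)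
          linarith
      | succ n ih =>
        have hrec : a (n + 1) = c * a n + K := by
          simp only [hadef, pow_succ]
          have : c * (c ^ n * (M0 - L) + L) + K = c ^ n * c * (M0 - L) + (c * L + K) := by
            ring
          rw [this, hLc]
        constructor
        · rw [hrec]; have := mul_nonneg hc0 ih.1; linarith
        · rw [hrec]; exact hstep K hKpos (a n) ih.1 ih.2
    have htend : Filter.Tendsto a Filter.atTop (nhds L) := by
      have h1 : Filter.Tendsto (fun n : ℕ => c ^ n) Filter.atTop (nhds 0) :=
        tendsto_pow_atTop_nhds_zero_of_lt_one hc0 hc1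
      have h2 := (h1.mul_const (M0 - L)).add_const L
      simpa using h2
    have : ∀ᶠ n in Filter.atTop, a n < ε :=
      htend.eventually (eventually_lt_nhds (by rw [hL]; linarith))
    obtain ⟨n, hn⟩ := this.exists
    filter_upwards [(ha n).2] with t htle
    exact lt_of_le_of_lt htle hn
end

section
/- Let β ∈ (0,1) and u₀ ∈ L^1(ℝ^n) with ∫ u₀ = 0 and ∫ |x|^β |u₀(x)| dx < ∞. Then the Riesz potential I_β u₀ belongs to L^1(ℝ^n) and ‖I_β u₀‖_{L^1} ≤ C ∫ |x|^β |u₀(x)| dx for a constant C depending only on n and β. -/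
open MeasureTheory

/-- The Riesz potential `I_β u (x) = C(β,n) ∫ |x-y|^{β-n} u(y) dy`, with the standard
normalizing constant making its Fourier symbol `|ξ|^{-β}`. -/
noncomputable def rieszPotential (n : ℕ) (β : ℝ)
    (u : EuclideanSpace ℝ (Fin n) → ℝ) : EuclideanSpace ℝ (Fin n) → ℝ :=
  fun x => (Real.Gamma (((n : ℝ) - β) / 2) /
      (2 ^ β * Real.pi ^ ((n : ℝ) / 2) * Real.Gamma (β / 2))) *
    ∫ y, ‖x - y‖ ^ (β - (n : ℝ)) * u y


open MeasureTheory Set Metric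

open MeasureTheory Set Metric

open Module in
lemma lintegral_fun_norm_addHaar' {E : Type*} [NormedAddCommGroup E] [NormedSpace ℝ E]
    [MeasurableSpace E] [BorelSpace E] [Nontrivial E] [FiniteDimensional ℝ E]
    (μ : Measure E) [μ.IsAddHaarMeasure] (f : ℝ → ENNReal) (hf : Measurable f) :
    ∫⁻ x, f ‖x‖ ∂μ = μ.toSphere Set.univ *
      ∫⁻ y in Set.Ioi (0 : ℝ), ENNReal.ofReal (y ^ (finrank ℝ E - 1)) * f y := by
  have h1 : ∫⁻ x, f ‖x‖ ∂μ = ∫⁻ x : ({(0:E)}ᶜ : Set E), f ‖x.1‖ ∂(μ.comap (↑)) := by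
    rw [lintegral_subtype_comap (measurableSet_singleton _).compl fun x ↦ f (‖x‖),
      restrict_compl_singleton]
  have h2 : ∫⁻ x : ({(0:E)}ᶜ : Set E), f ‖x.1‖ ∂(μ.comap (↑)) =
      ∫⁻ p : sphere (0:E) 1 × Ioi (0:ℝ), f p.2
        ∂(μ.toSphere.prod (.volumeIoiPow (finrank ℝ E - 1))) :=
    by simpa using (μ.measurePreserving_homeomorphUnitSphereProd.lintegral_comp
      (f := fun p : sphere (0:E) 1 × Ioi (0:ℝ) => f p.2)
      (hf.comp (measurable_subtype_coe.comp measurable_snd)))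
  have h3 : ∫⁻ p : sphere (0:E) 1 × Ioi (0:ℝ), f p.2
        ∂(μ.toSphere.prod (.volumeIoiPow (finrank ℝ E - 1))) =
      ∫⁻ _ : sphere (0:E) 1, (∫⁻ y : Ioi (0:ℝ), f y
        ∂(Measure.volumeIoiPow (finrank ℝ E - 1))) ∂μ.toSphere :=
    MeasureTheory.lintegral_prod _ (by fun_prop)
  rw [h1, h2, h3, lintegral_const, Measure.volumeIoiPow,
    lintegral_withDensity_eq_lintegral_mul _ (by fun_prop) (by fun_prop)]
  simp only [Pi.mul_apply]
  rw [lintegral_subtype_comap measurableSet_Ioi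
    (fun t => ENNReal.ofReal (t ^ (Module.finrank ℝ E - 1)) * f t), mul_comm]

section
variable {n : ℕ} {β : ℝ}

local notation "E" => EuclideanSpace ℝ (Fin n)

lemma nontrivE (hn : 1 ≤ n) : Nontrivial (EuclideanSpace ℝ (Fin n)) :=
  Module.nontrivial_of_finrank_pos (R := ℝ)
    (by rw [finrank_euclideanSpace_fin]; omega)

/-- General radial computation. -/
lemma radial_comp (hn : 1 ≤ n) {c : ℝ} (g : ℝ → ENNReal)
    (hg : g = fun t => ENNReal.ofReal (t ^ (c - ((n : ℝ) - 1)))) {s : Set ℝ}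
    (hs : MeasurableSet s) (hs0 : s ⊆ Ioi 0) :
    ∫⁻ x : E, (s.indicator g) ‖x‖ =
      (volume : Measure E).toSphere univ * ∫⁻ t in s, ENNReal.ofReal (t ^ c) := by
  haveI := nontrivE hn
  have hgm : Measurable g := by subst hg; fun_prop
  rw [lintegral_fun_norm_addHaar' _ _ (hgm.indicator hs)]
  congr 1
  have hrw : ∀ y : ℝ, ENNReal.ofReal (y ^ (Module.finrank ℝ (EuclideanSpace ℝ (Fin n)) - 1))
      * (s.indicator g) y = s.indicator (fun y => ENNReal.ofReal
        (y ^ (Module.finrank ℝ (EuclideanSpace ℝ (Fin n)) - 1)) * g y) y := by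
    intro y
    by_cases hy : y ∈ s <;> simp [hy]
  rw [lintegral_congr hrw, setLIntegral_indicator hs, inter_eq_left.2 hs0]
  apply setLIntegral_congr_fun hs
  intro y hy
  have hy0 : 0 < y := hs0 hy
  rw [hg, finrank_euclideanSpace_fin]; dsimp only; rw [← ENNReal.ofReal_mul (by positivity)]
  congr 1
  rw [← Real.rpow_natCast y (n-1), ← Real.rpow_add hy0]
  congr 1
  have : ((n - 1 : ℕ) : ℝ) = (n : ℝ) - 1 := by
    have : (1:ℕ) ≤ n := hn
    push_cast [Nat.cast_sub this]
    ring
  rw [this]; ring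

lemma lemA (hn : 1 ≤ n) (hβ0 : 0 < β) (hβ1 : β < 1) {r : ℝ} (hr : 0 < r) :
    ∫⁻ x in ball (0 : E) r, ENNReal.ofReal (‖x‖ ^ (β - (n:ℝ))) =
      (volume : Measure E).toSphere univ * ENNReal.ofReal (r ^ β / β) := by
  have h0 : ∫⁻ x in ball (0 : E) r, ENNReal.ofReal (‖x‖ ^ (β - (n:ℝ))) =
      ∫⁻ x : E, ((Ioo 0 r).indicator (fun t => ENNReal.ofReal (t ^ ((β-1) - ((n:ℝ)-1)))) ‖x‖) := by
    rw [← lintegral_indicator measurableSet_ball]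
    apply lintegral_congr
    intro x
    have he : (β - 1) - ((n:ℝ) - 1) = β - n := by ring
    rw [he]
    have hβn : β - (n:ℝ) ≠ 0 := by
      have h1 : (1:ℝ) ≤ n := by exact_mod_cast hn
      intro hc; nlinarith
    rcases eq_or_ne ‖x‖ 0 with h|h
    · simp [Set.indicator_apply, h, Real.zero_rpow hβn, lt_irrefl]
    · have hpos : 0 < ‖x‖ := lt_of_le_of_ne (norm_nonneg x) (Ne.symm h)
      by_cases hx : x ∈ ball (0:E) r
      · rw [indicator_of_mem hx, indicator_of_mem (by exact ⟨hpos, mem_ball_zero_iff.1 hx⟩)]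
      · rw [indicator_of_notMem hx, indicator_of_notMem (fun hc =>
          hx (mem_ball_zero_iff.2 hc.2))]
  rw [h0, radial_comp hn _ rfl measurableSet_Ioo (fun y hy => hy.1)]
  congr 1
  have hint : IntegrableOn (fun t : ℝ => t ^ (β - 1)) (Ioo 0 r) := by
    apply ((intervalIntegral.intervalIntegrable_rpow' (by linarith)).1).mono_set
    exact Ioo_subset_Ioc_self
  rw [← ofReal_integral_eq_lintegral_ofReal hint ?_]
  · congr 1
    rw [setIntegral_congr_set Ioo_ae_eq_Ioc, ← intervalIntegral.integral_of_le hr.le,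
      integral_rpow (Or.inl (by linarith))]
    have h11 : β - 1 + 1 = β := by ring
    rw [h11, Real.zero_rpow (ne_of_gt hβ0), sub_zero]
  · filter_upwards [ae_restrict_mem measurableSet_Ioo] with y hy
    exact Real.rpow_nonneg hy.1.le _

lemma lemB (hn : 1 ≤ n) (hβ0 : 0 < β) (hβ1 : β < 1) {r : ℝ} (hr : 0 < r) :
    ∫⁻ x in (closedBall (0 : E) r)ᶜ, ENNReal.ofReal (‖x‖ ^ (β - (n:ℝ) - 1)) =
      (volume : Measure E).toSphere univ * ENNReal.ofReal (-(r ^ (β-1)) / (β-1)) := by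
  have h0 : ∫⁻ x in (closedBall (0 : E) r)ᶜ, ENNReal.ofReal (‖x‖ ^ (β - (n:ℝ) - 1)) =
      ∫⁻ x : E, ((Ioi r).indicator (fun t => ENNReal.ofReal (t ^ ((β-2) - ((n:ℝ)-1)))) ‖x‖) := by
    rw [← lintegral_indicator measurableSet_closedBall.compl]
    apply lintegral_congr
    intro x
    have he : (β - 2) - ((n:ℝ) - 1) = β - n - 1 := by ring
    rw [he]
    by_cases hx : x ∈ (closedBall (0:E) r)ᶜ
    · rw [indicator_of_mem hx, indicator_of_mem (by
        simpa [mem_compl_iff, mem_closedBall_zero_iff, not_le] using hx)]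
    · rw [indicator_of_notMem hx, indicator_of_notMem (by
        simpa [mem_compl_iff, mem_closedBall_zero_iff, not_le] using hx)]
  rw [h0, radial_comp hn _ rfl measurableSet_Ioi (fun y hy => lt_trans hr hy)]
  congr 1
  rw [← ofReal_integral_eq_lintegral_ofReal (integrableOn_Ioi_rpow_of_lt (by linarith) hr) ?_]
  · congr 1
    rw [integral_Ioi_rpow_of_lt (by linarith) hr]
    have h21 : β - 2 + 1 = β - 1 := by ring
    rw [h21]
  · filter_upwards [ae_restrict_mem measurableSet_Ioi] with y hy
    exact Real.rpow_nonneg (le_trans hr.le hy.le) _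

lemma mvt_rpow {p a b m : ℝ} (hp : p < 0) (hm : 0 < m) (ha : m ≤ a) (hb : m ≤ b) :
    |a ^ p - b ^ p| ≤ (-p) * m ^ (p - 1) * |a - b| := by
  have key : ∀ t ∈ Ici m, HasDerivWithinAt (fun s : ℝ => s ^ p) (p * t ^ (p-1)) (Ici m) t := by
    intro t ht
    exact (Real.hasDerivAt_rpow_const (Or.inl (ne_of_gt (lt_of_lt_of_le hm ht)))).hasDerivWithinAt
  have bnd : ∀ t ∈ Ici m, ‖p * t ^ (p-1)‖ ≤ (-p) * m ^ (p - 1) := by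
    intro t ht
    rw [norm_mul, Real.norm_eq_abs, Real.norm_eq_abs, abs_of_neg hp,
      abs_of_nonneg (Real.rpow_nonneg (le_trans hm.le ht) _)]
    exact mul_le_mul_of_nonneg_left
      (Real.rpow_le_rpow_of_nonpos hm ht (by linarith)) (by linarith)
  have := (convex_Ici m).norm_image_sub_le_of_norm_hasDerivWithin_le key bnd hb ha
  simpa [Real.norm_eq_abs] using this

lemma diff_bound (hn : 1 ≤ n) (hβ1 : β < 1) {x y : E} (hxy : 2 * ‖y‖ < ‖x‖) :
    |‖x - y‖ ^ (β - (n:ℝ)) - ‖x‖ ^ (β - (n:ℝ))| ≤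
      ((n:ℝ) - β) * (‖x‖/2) ^ (β - (n:ℝ) - 1) * ‖y‖ := by
  have hn1 : (1:ℝ) ≤ n := by exact_mod_cast hn
  have hp : β - (n:ℝ) < 0 := by linarith
  have hx0 : 0 < ‖x‖ := lt_of_le_of_lt (by positivity) hxy
  have hm : 0 < ‖x‖/2 := by linarith
  have ha : ‖x‖/2 ≤ ‖x - y‖ := by
    have h1 : ‖x‖ - ‖y‖ ≤ ‖x - y‖ := norm_sub_norm_le x y
    linarith
  have hb : ‖x‖/2 ≤ ‖x‖ := by linarith
  have key := mvt_rpow hp hm ha hb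
  have hd : |‖x - y‖ - ‖x‖| ≤ ‖y‖ := by
    have := abs_norm_sub_norm_le (x - y) x
    simpa using this
  calc |‖x - y‖ ^ (β - (n:ℝ)) - ‖x‖ ^ (β - (n:ℝ))|
      ≤ (-(β - (n:ℝ))) * (‖x‖/2) ^ (β - (n:ℝ) - 1) * |‖x - y‖ - ‖x‖| := key
    _ ≤ ((n:ℝ) - β) * (‖x‖/2) ^ (β - (n:ℝ) - 1) * ‖y‖ := by
        rw [show (-(β - (n:ℝ))) = (n:ℝ) - β by ring]
        exact mul_le_mul_of_nonneg_left hd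
          (mul_nonneg (by linarith) (Real.rpow_nonneg (by positivity) _))

/-- The constant in the kernel estimate. -/
noncomputable def Aconst (n : ℕ) (β : ℝ) : ℝ :=
  2*(4^β/β) + (((n:ℝ)-β) * 2^(1-(β-(n:ℝ))) * 2^(β-1)) * (-1/(β-1))

lemma Aconst_pos (hn : 1 ≤ n) (hβ0 : 0 < β) (hβ1 : β < 1) : 0 < Aconst n β := by
  have hn1 : (1:ℝ) ≤ n := by exact_mod_cast hn
  have h1 : (0:ℝ) < 2*(4^β/β) := by positivity
  have h2 : (0:ℝ) ≤ (((n:ℝ)-β) * 2^(1-(β-(n:ℝ))) * 2^(β-1)) * (-1/(β-1)) := by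
    apply mul_nonneg
    · have h3 : (0:ℝ) ≤ (n:ℝ)-β := by linarith
      exact mul_nonneg (mul_nonneg h3 (Real.rpow_nonneg (by norm_num) _))
        (Real.rpow_nonneg (by norm_num) _)
    · rw [neg_div]
      have : β - 1 < 0 := by linarith
      have := div_neg_of_pos_of_neg one_pos this
      linarith
  unfold Aconst; linarith

lemma lemD (hn : 1 ≤ n) (hβ0 : 0 < β) (hβ1 : β < 1) (y : E) :
    ∫⁻ x : E, ENNReal.ofReal |‖x - y‖ ^ (β-(n:ℝ)) - ‖x‖ ^ (β-(n:ℝ))| ≤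
      (volume : Measure E).toSphere univ * ENNReal.ofReal (Aconst n β)
        * ENNReal.ofReal (‖y‖^β) := by
  have hn1 : (1:ℝ) ≤ n := by exact_mod_cast hn
  have hp : β - (n:ℝ) < 0 := by linarith
  rcases eq_or_ne y 0 with rfl|hy
  · simp
  have hy0 : 0 < ‖y‖ := norm_pos_iff.2 hy
  set κ := (volume : Measure E).toSphere univ with hκ
  set p := β - (n:ℝ) with hpdef
  set S := closedBall (0:E) (2*‖y‖) with hS
  -- split the integral
  rw [← lintegral_add_compl (μ := (volume : Measure E))
    (fun x : E => ENNReal.ofReal |‖x - y‖ ^ p - ‖x‖ ^ p|)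
    (measurableSet_closedBall : MeasurableSet S)]
  -- near part
  have hnear : ∫⁻ x in S, ENNReal.ofReal |‖x - y‖ ^ p - ‖x‖ ^ p| ≤
      κ * ENNReal.ofReal ((4*‖y‖) ^ β / β) + κ * ENNReal.ofReal ((4*‖y‖) ^ β / β) := by
    have step1 : ∫⁻ x in S, ENNReal.ofReal |‖x - y‖ ^ p - ‖x‖ ^ p| ≤
        ∫⁻ x in S, (ENNReal.ofReal (‖x - y‖ ^ p) + ENNReal.ofReal (‖x‖ ^ p)) := by
      apply lintegral_mono
      intro x
      dsimp only
      rw [← ENNReal.ofReal_add (Real.rpow_nonneg (norm_nonneg _) _)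
        (Real.rpow_nonneg (norm_nonneg _) _)]
      apply ENNReal.ofReal_le_ofReal
      calc |‖x - y‖ ^ p - ‖x‖ ^ p| ≤ |‖x - y‖ ^ p| + |‖x‖ ^ p| := abs_sub _ _
        _ = ‖x - y‖ ^ p + ‖x‖ ^ p := by
            rw [abs_of_nonneg (Real.rpow_nonneg (norm_nonneg _) _),
              abs_of_nonneg (Real.rpow_nonneg (norm_nonneg _) _)]
    rw [lintegral_add_left (by fun_prop)] at step1
    refine step1.trans (add_le_add ?_ ?_)
    · -- shifted term
      have hsub : S ⊆ ball y (4*‖y‖) := by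
        intro x hx
        rw [hS, mem_closedBall_zero_iff] at hx
        rw [mem_ball, dist_eq_norm]
        calc ‖x - y‖ ≤ ‖x‖ + ‖y‖ := norm_sub_le x y
          _ ≤ 2*‖y‖ + ‖y‖ := by linarith
          _ < 4*‖y‖ := by linarith
      refine (lintegral_mono_set hsub).trans ?_
      have htrans : ∫⁻ x in ball y (4*‖y‖), ENNReal.ofReal (‖x - y‖ ^ p) =
          ∫⁻ z in ball (0:E) (4*‖y‖), ENNReal.ofReal (‖z‖ ^ p) := by
        rw [← lintegral_indicator measurableSet_ball, ← lintegral_indicator measurableSet_ball]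
        rw [← lintegral_add_right_eq_self
          (fun x => (ball y (4*‖y‖)).indicator (fun x => ENNReal.ofReal (‖x - y‖ ^ p)) x) y]
        apply lintegral_congr
        intro z
        by_cases hz : z ∈ ball (0:E) (4*‖y‖)
        · rw [indicator_of_mem (by simpa [mem_ball, dist_eq_norm] using
            (by simpa [mem_ball_zero_iff] using hz : ‖z‖ < 4*‖y‖)), indicator_of_mem hz]
          simp
        · rw [indicator_of_notMem (fun hc => hz (by
            simpa [mem_ball_zero_iff] using (by simpa [mem_ball, dist_eq_norm] using hc : ‖z + y - y‖ < 4*‖y‖))),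
            indicator_of_notMem hz]
      rw [htrans]
      exact le_of_eq (lemA hn hβ0 hβ1 (by positivity))
    · refine (lintegral_mono_set (show S ⊆ ball (0:E) (4*‖y‖) by
        intro x hx
        rw [hS, mem_closedBall_zero_iff] at hx
        rw [mem_ball_zero_iff]; linarith)).trans ?_
      exact le_of_eq (lemA hn hβ0 hβ1 (by positivity))
  -- tail part
  have htail : ∫⁻ x in Sᶜ, ENNReal.ofReal |‖x - y‖ ^ p - ‖x‖ ^ p| ≤
      ENNReal.ofReal (((n:ℝ)-β) * 2^(1-p) * ‖y‖) *
        (κ * ENNReal.ofReal (-(((2*‖y‖) ^ (β-1))) / (β-1))) := by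
    have step1 : ∫⁻ x in Sᶜ, ENNReal.ofReal |‖x - y‖ ^ p - ‖x‖ ^ p| ≤
        ∫⁻ x in Sᶜ, ENNReal.ofReal (((n:ℝ)-β) * 2^(1-p) * ‖y‖) *
          ENNReal.ofReal (‖x‖ ^ (p - 1)) := by
      apply setLIntegral_mono (by fun_prop)
      intro x hx
      rw [hS, mem_compl_iff, mem_closedBall_zero_iff, not_le] at hx
      rw [← ENNReal.ofReal_mul (mul_nonneg (mul_nonneg (by linarith)
        (Real.rpow_nonneg (by norm_num) _)) (norm_nonneg _))]
      apply ENNReal.ofReal_le_ofReal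
      have h1 := diff_bound hn hβ1 (x := x) (y := y) hx
      have hx0 : 0 < ‖x‖ := lt_of_le_of_lt (by positivity) hx
      have h2 : (‖x‖/2) ^ (p - 1) = 2^(1-p) * ‖x‖ ^ (p-1) := by
        rw [Real.div_rpow (norm_nonneg _) (by norm_num)]
        rw [div_eq_mul_inv, ← Real.rpow_neg (by norm_num)]
        rw [show -(p-1) = 1-p by ring]
        ring
      calc |‖x - y‖ ^ p - ‖x‖ ^ p| ≤ ((n:ℝ) - β) * (‖x‖/2) ^ (p - 1) * ‖y‖ := h1
        _ = ((n:ℝ)-β) * 2^(1-p) * ‖y‖ * ‖x‖ ^ (p-1) := by rw [h2]; ring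
    refine step1.trans ?_
    rw [lintegral_const_mul' _ _ ENNReal.ofReal_ne_top]
    apply mul_le_mul_right _ _
    have := lemB hn hβ0 hβ1 (r := 2*‖y‖) (by positivity) (n := n)
    rw [show p - 1 = β - (n:ℝ) - 1 by rw [hpdef]]
    exact le_of_eq this
  refine (add_le_add hnear htail).trans ?_
  -- arithmetic
  have hβ1' : β - 1 < 0 := by linarith
  have hβne : β ≠ 0 := ne_of_gt hβ0
  have hβ1ne : β - 1 ≠ 0 := ne_of_lt hβ1'
  have hbnn : 0 ≤ -(((2*‖y‖) ^ (β-1))) / (β-1) := by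
    rw [div_nonneg_iff]
    right
    exact ⟨neg_nonpos.2 (Real.rpow_nonneg (by positivity) _), hβ1'.le⟩
  have hann : 0 ≤ ((n:ℝ)-β) * 2^(1-p) * ‖y‖ :=
    mul_nonneg (mul_nonneg (by linarith) (Real.rpow_nonneg (by norm_num) _)) (norm_nonneg _)
  have r1nn : 0 ≤ (4*‖y‖) ^ β / β := by positivity
  rw [show ENNReal.ofReal (((n:ℝ)-β) * 2^(1-p) * ‖y‖) *
      (κ * ENNReal.ofReal (-(((2*‖y‖) ^ (β-1))) / (β-1))) =
      κ * ENNReal.ofReal ((((n:ℝ)-β) * 2^(1-p) * ‖y‖) * (-(((2*‖y‖) ^ (β-1))) / (β-1))) from by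
    rw [ENNReal.ofReal_mul hann]; ring]
  rw [← mul_add, ← ENNReal.ofReal_add r1nn r1nn, ← mul_add,
    ← ENNReal.ofReal_add (by linarith) (mul_nonneg hann hbnn)]
  rw [show κ * ENNReal.ofReal (Aconst n β) * ENNReal.ofReal (‖y‖ ^ β) =
      κ * ENNReal.ofReal (Aconst n β * ‖y‖ ^ β) from by
    rw [ENNReal.ofReal_mul (Aconst_pos hn hβ0 hβ1).le]; ring]
  apply mul_le_mul_right
  apply ENNReal.ofReal_le_ofReal
  apply le_of_eq
  rw [hpdef, Aconst]
  rw [Real.mul_rpow (by norm_num) (norm_nonneg y), Real.mul_rpow (by norm_num) (norm_nonneg y)]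
  have e3 : ‖y‖^β = ‖y‖ * ‖y‖^(β-1) := by
    nth_rewrite 1 [show β = 1 + (β-1) by ring]
    rw [Real.rpow_add hy0, Real.rpow_one]
  rw [e3]
  field_simp
  ring

end

/-- If `β ∈ (0,1)`, `u₀ ∈ L¹(ℝⁿ)`, `∫ u₀ = 0` and `∫ |x|^β |u₀(x)| dx < ∞`, then
`I_β u₀ ∈ L¹(ℝⁿ)` with `‖I_β u₀‖₁ ≤ C ∫ |x|^β |u₀(x)| dx`, `C = C(n,β)`. -/
theorem stmt6 (n : ℕ) (β : ℝ) (hn : 1 ≤ n) (hβ0 : 0 < β) (hβ1 : β < 1) :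
    ∃ C : ℝ, 0 < C ∧ ∀ u₀ : EuclideanSpace ℝ (Fin n) → ℝ,
      Integrable u₀ → (∫ x, u₀ x) = 0 →
      Integrable (fun x => ‖x‖ ^ β * |u₀ x|) →
      Integrable (rieszPotential n β u₀) ∧
      (∫ x, |rieszPotential n β u₀ x|) ≤ C * ∫ x, ‖x‖ ^ β * |u₀ x| := by
  set E' := EuclideanSpace ℝ (Fin n)
  set c : ℝ := Real.Gamma (((n : ℝ) - β) / 2) /
      (2 ^ β * Real.pi ^ ((n : ℝ) / 2) * Real.Gamma (β / 2)) with hc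
  set κ : ENNReal := (volume : Measure E').toSphere Set.univ with hκ
  set D : ENNReal := κ * ENNReal.ofReal (Aconst n β) with hD
  have hDne : D ≠ ⊤ := ENNReal.mul_ne_top (measure_ne_top _ _) ENNReal.ofReal_ne_top
  refine ⟨max 1 (|c| * D.toReal), lt_of_lt_of_le one_pos (le_max_left _ _), ?_⟩
  intro u₀ hu hmean hβint
  set p : ℝ := β - (n : ℝ) with hp
  set G : E' × E' → ℝ := fun z => (‖z.1 - z.2‖ ^ p - ‖z.1‖ ^ p) * u₀ z.2 with hG
  have hmeas : AEStronglyMeasurable G ((volume : Measure E').prod volume) := by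
    have h1 : Measurable fun z : E' × E' => ‖z.1 - z.2‖ ^ p - ‖z.1‖ ^ p := by fun_prop
    have h2 : AEStronglyMeasurable (fun z : E' × E' => u₀ z.2)
        ((volume : Measure E').prod volume) :=
      hu.1.comp_quasiMeasurePreserving Measure.quasiMeasurePreserving_snd
    exact h1.aestronglyMeasurable.mul h2
  have hinner : ∀ y : E', ∫⁻ x : E', ↑‖G (x, y)‖₊ ≤
      D * ENNReal.ofReal (‖y‖ ^ β * |u₀ y|) := by
    intro y
    have hrw : ∀ x : E', (↑‖G (x, y)‖₊ : ENNReal) =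
        ENNReal.ofReal |‖x - y‖ ^ p - ‖x‖ ^ p| * ENNReal.ofReal |u₀ y| := by
      intro x
      rw [← enorm_eq_nnnorm, Real.enorm_eq_ofReal_abs, hG]
      dsimp only
      rw [abs_mul, ENNReal.ofReal_mul (abs_nonneg _)]
    rw [lintegral_congr hrw, lintegral_mul_const' _ _ ENNReal.ofReal_ne_top]
    calc (∫⁻ x : E', ENNReal.ofReal |‖x - y‖ ^ p - ‖x‖ ^ p|) * ENNReal.ofReal |u₀ y|
        ≤ (D * ENNReal.ofReal (‖y‖ ^ β)) * ENNReal.ofReal |u₀ y| := by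
          apply mul_le_mul_left
          rw [hD, hp]
          exact lemD hn hβ0 hβ1 y
      _ = D * ENNReal.ofReal (‖y‖ ^ β * |u₀ y|) := by
          rw [ENNReal.ofReal_mul (Real.rpow_nonneg (norm_nonneg _) _), mul_assoc]
  have hIint : ENNReal.ofReal (∫ x : E', ‖x‖ ^ β * |u₀ x|) =
      ∫⁻ x : E', ENNReal.ofReal (‖x‖ ^ β * |u₀ x|) := by
    apply ofReal_integral_eq_lintegral_ofReal hβint
    filter_upwards with x
    positivity
  have hbound2 : ∫⁻ z, ↑‖G z‖₊ ∂((volume : Measure E').prod volume) ≤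
      D * ENNReal.ofReal (∫ x : E', ‖x‖ ^ β * |u₀ x|) := by
    rw [← lintegral_congr fun z => enorm_eq_nnnorm (G z), lintegral_prod_symm _ hmeas.enorm]
    calc ∫⁻ y : E', ∫⁻ x : E', ↑‖G (x, y)‖₊ ≤
        ∫⁻ y : E', D * ENNReal.ofReal (‖y‖ ^ β * |u₀ y|) := lintegral_mono hinner
      _ = D * ∫⁻ y : E', ENNReal.ofReal (‖y‖ ^ β * |u₀ y|) :=
          lintegral_const_mul' _ _ hDne
      _ = D * ENNReal.ofReal (∫ x : E', ‖x‖ ^ β * |u₀ x|) := by rw [hIint]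
  have hGint : Integrable G ((volume : Measure E').prod volume) := by
    refine ⟨hmeas, ?_⟩
    rw [HasFiniteIntegral]
    exact lt_of_le_of_lt hbound2 (ENNReal.mul_lt_top hDne.lt_top ENNReal.ofReal_lt_top)
  have hI : Integrable (fun x : E' => ∫ y, G (x, y)) := hGint.integral_prod_left
  have hae : rieszPotential n β u₀ =ᵐ[volume] fun x : E' => c * ∫ y, G (x, y) := by
    filter_upwards [hGint.prod_right_ae] with x hGx
    show (Real.Gamma (((n : ℝ) - β) / 2) /
      (2 ^ β * Real.pi ^ ((n : ℝ) / 2) * Real.Gamma (β / 2))) *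
        (∫ y, ‖x - y‖ ^ (β - (n : ℝ)) * u₀ y) = _
    rw [← hc, ← hp]
    congr 1
    have hker : Integrable (fun y : E' => ‖x‖ ^ p * u₀ y) := hu.const_mul _
    have hsplit : (fun y : E' => ‖x - y‖ ^ p * u₀ y) =
        fun y => G (x, y) + ‖x‖ ^ p * u₀ y := by
      funext y
      rw [hG]
      dsimp only
      ring
    rw [hsplit, integral_add hGx hker, integral_const_mul, hmean, mul_zero, add_zero]
  have hRint : Integrable (rieszPotential n β u₀) := (hI.const_mul c).congr hae.symm
  refine ⟨hRint, ?_⟩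
  have hInn : 0 ≤ ∫ x : E', ‖x‖ ^ β * |u₀ x| := by
    apply integral_nonneg
    intro x
    positivity
  have key : ∫ x, |rieszPotential n β u₀ x| ≤ |c| * D.toReal *
      ∫ x : E', ‖x‖ ^ β * |u₀ x| := by
    have e1 : ∫ x, |rieszPotential n β u₀ x| = ∫ x : E', |c * ∫ y, G (x, y)| :=
      integral_congr_ae (hae.mono fun x hx => by simp only [hx])
    have e2 : ∫ x : E', |c * ∫ y, G (x, y)| =
        (∫⁻ x : E', ENNReal.ofReal |c * ∫ y, G (x, y)|).toReal := by
      apply integral_eq_lintegral_of_nonneg_ae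
      · filter_upwards with x; positivity
      · exact (hI.const_mul c).abs.1
    have e3 : ∫⁻ x : E', ENNReal.ofReal |c * ∫ y, G (x, y)| ≤
        ENNReal.ofReal |c| * (D * ENNReal.ofReal (∫ x : E', ‖x‖ ^ β * |u₀ x|)) := by
      have hptw : ∀ x : E', ENNReal.ofReal |c * ∫ y, G (x, y)| =
          ENNReal.ofReal |c| * ↑‖∫ y, G (x, y)‖₊ := by
        intro x
        rw [abs_mul, ENNReal.ofReal_mul (abs_nonneg _)]
        congr 1
        rw [← enorm_eq_nnnorm, Real.enorm_eq_ofReal_abs]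
      rw [lintegral_congr hptw, lintegral_const_mul' _ _ ENNReal.ofReal_ne_top]
      apply mul_le_mul_right
      calc ∫⁻ x : E', ↑‖∫ y, G (x, y)‖₊
          ≤ ∫⁻ x : E', ∫⁻ y, ↑‖G (x, y)‖₊ :=
            lintegral_mono fun x => enorm_integral_le_lintegral_enorm _
        _ = ∫⁻ z, ↑‖G z‖₊ ∂((volume : Measure E').prod volume) :=
            (lintegral_prod _ hmeas.enorm).symm
        _ ≤ D * ENNReal.ofReal (∫ x : E', ‖x‖ ^ β * |u₀ x|) := hbound2
    rw [e1, e2]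
    calc (∫⁻ x : E', ENNReal.ofReal |c * ∫ y, G (x, y)|).toReal
        ≤ (ENNReal.ofReal |c| * (D * ENNReal.ofReal (∫ x : E', ‖x‖ ^ β * |u₀ x|))).toReal := by
          apply ENNReal.toReal_mono _ e3
          exact ENNReal.mul_ne_top ENNReal.ofReal_ne_top
            (ENNReal.mul_ne_top hDne ENNReal.ofReal_ne_top)
      _ = |c| * D.toReal * ∫ x : E', ‖x‖ ^ β * |u₀ x| := by
          rw [ENNReal.toReal_mul, ENNReal.toReal_mul, ENNReal.toReal_ofReal (abs_nonneg _),
            ENNReal.toReal_ofReal hInn]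
          ring
  refine key.trans ?_
  apply mul_le_mul_of_nonneg_right (le_max_right _ _) hInn
end

section
/- For β ∈ (0,1), sup over unit vectors e ∈ ℝ^n of ∫_{ℝ^n} | |ω − e|^{β−n} − |ω|^{β−n} | dω is finite. -/
open MeasureTheory Set Metric
open scoped ENNReal

local notation "dim" => Module.finrank ℝ

lemma aux_mvt {a : ℝ} (ha : a < 0) {x y : ℝ} (hx : 0 < x) (hxy : x ≤ y) :
    |y ^ a - x ^ a| ≤ (-a) * x ^ (a - 1) * (y - x) := by
  rcases eq_or_lt_of_le hxy with rfl | hlt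
  · simp only [sub_self, abs_zero, mul_zero, le_refl]
  · obtain ⟨c, hc, hceq⟩ := exists_hasDerivAt_eq_slope (fun t => t ^ a)
      (fun t => a * t ^ (a - 1)) hlt
      (by
        apply ContinuousOn.rpow_const continuousOn_id
        intro t ht
        exact Or.inl (ne_of_gt (lt_of_lt_of_le hx ht.1)))
      (fun t ht => Real.hasDerivAt_rpow_const (Or.inl (ne_of_gt (lt_trans hx ht.1))))
    have hc0 : 0 < c := lt_trans hx hc.1
    have heq : y ^ a - x ^ a = a * c ^ (a - 1) * (y - x) := by
      rw [eq_comm, div_eq_iff (by intro h; rw [sub_eq_zero] at h; linarith : y - x ≠ 0)] at hceq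
      linarith [hceq]
    rw [heq, abs_mul, abs_mul, abs_of_pos (by linarith : (0:ℝ) < y - x),
      abs_of_pos (Real.rpow_pos_of_pos hc0 _), abs_of_neg ha]
    have hcx : c ^ (a - 1) ≤ x ^ (a - 1) :=
      Real.rpow_le_rpow_of_nonpos hx hc.1.le (by linarith)
    have hna : (0:ℝ) < -a := by linarith
    have := mul_le_mul_of_nonneg_left hcx hna.le
    nlinarith

lemma aux_pair {a : ℝ} (ha : a < 0) {u v : ℝ} (hv : 2 ≤ v) (h1 : |u - v| ≤ 1) :
    |u ^ a - v ^ a| ≤ (-a) * (v / 2) ^ (a - 1) := by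
  have hv2 : (0:ℝ) < v / 2 := by linarith
  have hu : v - 1 ≤ u := by cases abs_le.1 h1; linarith
  have hu0 : 0 < u := by linarith
  have hhalf : v / 2 ≤ v - 1 := by linarith
  rcases le_total u v with h | h
  · have := aux_mvt ha hu0 h
    have hux : u ^ (a-1) ≤ (v/2) ^ (a-1) :=
      Real.rpow_le_rpow_of_nonpos hv2 (by linarith) (by linarith)
    have hvu : v - u ≤ 1 := by linarith
    have hna : (0:ℝ) < -a := by linarith
    calc |u ^ a - v ^ a| = |v ^ a - u ^ a| := abs_sub_comm _ _
      _ ≤ (-a) * u ^ (a-1) * (v - u) := this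
      _ ≤ (-a) * u ^ (a-1) * 1 := by
          apply mul_le_mul_of_nonneg_left hvu (by positivity)
      _ ≤ (-a) * (v/2) ^ (a-1) := by
          rw [mul_one]; exact mul_le_mul_of_nonneg_left hux hna.le
  · have hv0 : (0:ℝ) < v := by linarith
    have := aux_mvt ha hv0 h
    have hux : v ^ (a-1) ≤ (v/2) ^ (a-1) :=
      Real.rpow_le_rpow_of_nonpos hv2 (by linarith) (by linarith)
    have huv : u - v ≤ 1 := by cases abs_le.1 h1; linarith
    have hna : (0:ℝ) < -a := by linarith
    calc |u ^ a - v ^ a| ≤ (-a) * v ^ (a-1) * (u - v) := this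
      _ ≤ (-a) * v ^ (a-1) * 1 := by
          apply mul_le_mul_of_nonneg_left huv (by positivity)
      _ ≤ (-a) * (v/2) ^ (a-1) := by
          rw [mul_one]; exact mul_le_mul_of_nonneg_left hux hna.le

lemma radial_lintegral {E : Type*} [NormedAddCommGroup E] [NormedSpace ℝ E]
    [MeasurableSpace E] [BorelSpace E] [FiniteDimensional ℝ E] [Nontrivial E]
    (μ : Measure E) [μ.IsAddHaarMeasure] (f : ℝ → ℝ≥0∞) (hf : Measurable f) :
    ∫⁻ x, f ‖x‖ ∂μ = μ.toSphere univ *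
      ∫⁻ r in Ioi (0:ℝ), ENNReal.ofReal (r ^ (dim E - 1)) * f r := by
  calc
    ∫⁻ x, f ‖x‖ ∂μ = ∫⁻ x : ({(0:E)}ᶜ : Set E), f ‖x.1‖ ∂(μ.comap (↑)) := by
      rw [lintegral_subtype_comap (measurableSet_singleton _).compl fun x ↦ f (‖x‖),
        MeasureTheory.restrict_compl_singleton]
    _ = ∫⁻ x : Metric.sphere (0 : E) 1 × Ioi (0 : ℝ), f x.2
          ∂(μ.toSphere.prod (.volumeIoiPow (dim E - 1))) := by
      have h := μ.measurePreserving_homeomorphUnitSphereProd.lintegral_comp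
        ((hf.comp measurable_subtype_coe).comp measurable_snd)
      refine (lintegral_congr fun x => ?_).trans h
      simp
    _ = μ.toSphere univ * ∫⁻ r : Ioi (0:ℝ), f r ∂(Measure.volumeIoiPow (dim E - 1)) := by
      rw [show (fun x : Metric.sphere (0 : E) 1 × Ioi (0 : ℝ) => f x.2) =
        ((f ∘ Subtype.val) ∘ Prod.snd) from rfl,
        lintegral_prod _ (((hf.comp measurable_subtype_coe).comp measurable_snd).aemeasurable)]
      simp only [Function.comp_apply, lintegral_const, Measure.restrict_univ]
      rw [mul_comm]
    _ = μ.toSphere univ * ∫⁻ r in Ioi (0:ℝ), ENNReal.ofReal (r ^ (dim E - 1)) * f r := by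
      congr 1
      rw [show (fun r : Ioi (0:ℝ) => f r) = (f ∘ Subtype.val) from rfl, Measure.volumeIoiPow,
        lintegral_withDensity_eq_lintegral_mul _
        (by exact (measurable_subtype_coe.pow_const _).ennreal_ofReal)
        (hf.comp measurable_subtype_coe)]
      rw [← lintegral_subtype_comap measurableSet_Ioi
        (fun r => ENNReal.ofReal (r ^ (dim E - 1)) * f r)]
      rfl

lemma integrable_radial {E : Type*} [NormedAddCommGroup E] [NormedSpace ℝ E]
    [MeasurableSpace E] [BorelSpace E] [FiniteDimensional ℝ E] [Nontrivial E]
    (μ : Measure E) [μ.IsAddHaarMeasure] (f : ℝ → ℝ) (hm : Measurable f)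
    (h0 : ∀ r, 0 ≤ f r)
    (hfin : IntegrableOn (fun r => r ^ (dim E - 1) * f r) (Ioi (0:ℝ))) :
    Integrable (fun x : E => f ‖x‖) μ := by
  refine ⟨(hm.comp measurable_norm).aestronglyMeasurable, ?_⟩
  rw [hasFiniteIntegral_iff_ofReal (Filter.Eventually.of_forall fun x => h0 _)]
  rw [radial_lintegral μ (fun r => ENNReal.ofReal (f r)) hm.ennreal_ofReal]
  refine ENNReal.mul_lt_top (measure_lt_top _ _) ?_
  have : ∫⁻ r in Ioi (0:ℝ), ENNReal.ofReal (r ^ (dim E - 1)) * ENNReal.ofReal (f r)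
      = ∫⁻ r in Ioi (0:ℝ), ENNReal.ofReal (r ^ (dim E - 1) * f r) := by
    refine setLIntegral_congr_fun measurableSet_Ioi
      (fun r hr => ?_)
    rw [ENNReal.ofReal_mul (pow_nonneg (le_of_lt hr) _)]
  rw [this]
  exact hfin.lintegral_lt_top

/-- For `β ∈ (0,1)`, the quantity `∫_{ℝⁿ} | |ω-e|^{β-n} - |ω|^{β-n} | dω` is bounded
uniformly over unit vectors `e ∈ ℝⁿ`. -/
theorem stmt7 (n : ℕ) (β : ℝ) (hn : 1 ≤ n) (hβ0 : 0 < β) (hβ1 : β < 1) :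
    ∃ C : ℝ, ∀ e : EuclideanSpace ℝ (Fin n), ‖e‖ = 1 →
      (IntegrableOn (fun ω : EuclideanSpace ℝ (Fin n) =>
          |‖ω - e‖ ^ (β - (n : ℝ)) - ‖ω‖ ^ (β - (n : ℝ))|) Set.univ) ∧
      (∫ ω : EuclideanSpace ℝ (Fin n),
          |‖ω - e‖ ^ (β - (n : ℝ)) - ‖ω‖ ^ (β - (n : ℝ))|) ≤ C := by
  set E := EuclideanSpace ℝ (Fin n) with hE
  have hdim : dim E = n := finrank_euclideanSpace_fin
  haveI : Nontrivial E := Module.nontrivial_of_finrank_pos (R := ℝ) (by rw [hdim]; omega)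
  set a : ℝ := β - n with ha_def
  have hn' : (1:ℝ) ≤ n := by exact_mod_cast hn
  have ha : a < 0 := by simp only [ha_def]; linarith
  -- radial profiles
  set f₁ : ℝ → ℝ := (Ioo (0:ℝ) 4).indicator (fun r => r ^ a) with hf₁
  set f₂ : ℝ → ℝ := (Ici (3:ℝ)).indicator (fun r => (-a) * (r/2) ^ (a-1)) with hf₂
  have hf₁m : Measurable f₁ := (measurable_id.pow_const a).indicator measurableSet_Ioo
  have hf₂m : Measurable f₂ :=
    (((measurable_id.div_const 2).pow_const (a-1)).const_mul (-a)).indicator measurableSet_Ici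
  have hf₁0 : ∀ r, 0 ≤ f₁ r := fun r =>
    Set.indicator_nonneg (fun s hs => Real.rpow_nonneg hs.1.le a) r
  have hf₂0 : ∀ r, 0 ≤ f₂ r := fun r =>
    Set.indicator_nonneg (fun s hs => by
      have h2 : (0:ℝ) ≤ s / 2 := by have := hs.out; linarith
      exact mul_nonneg (by linarith) (Real.rpow_nonneg h2 _)) r
  -- 1D integrability
  have hint₁ : IntegrableOn (fun r => r ^ (dim E - 1) * f₁ r) (Ioi (0:ℝ)) := by
    have heq : (fun r : ℝ => r ^ (dim E - 1) * f₁ r)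
        = (Ioo (0:ℝ) 4).indicator (fun r => r ^ (β - 1)) := by
      funext r
      by_cases hr : r ∈ Ioo (0:ℝ) 4
      · rw [hf₁, Set.indicator_of_mem hr, Set.indicator_of_mem hr]
        have hr0 : (0:ℝ) < r := hr.1
        rw [← Real.rpow_natCast r (dim E - 1), ← Real.rpow_add hr0]
        congr 1
        rw [hdim]
        push_cast [Nat.cast_sub hn]
        simp only [ha_def]
        ring
      · rw [hf₁, Set.indicator_of_notMem hr, Set.indicator_of_notMem hr, mul_zero]
    rw [heq]
    apply Integrable.integrableOn
    apply IntegrableOn.integrable_indicator _ measurableSet_Ioo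
    have h1 : IntervalIntegrable (fun r : ℝ => r ^ (β - 1)) volume 0 4 :=
      intervalIntegral.intervalIntegrable_rpow' (by linarith)
    exact (h1.1).mono_set Set.Ioo_subset_Ioc_self
  have hint₂ : IntegrableOn (fun r => r ^ (dim E - 1) * f₂ r) (Ioi (0:ℝ)) := by
    have heq : (fun r : ℝ => r ^ (dim E - 1) * f₂ r)
        = (Ici (3:ℝ)).indicator (fun r => ((-a) / 2 ^ (a-1)) * r ^ (β - 2)) := by
      funext r
      by_cases hr : r ∈ Ici (3:ℝ)
      · rw [hf₂, Set.indicator_of_mem hr, Set.indicator_of_mem hr]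
        have hr0 : (0:ℝ) < r := lt_of_lt_of_le (by norm_num) hr.out
        rw [Real.div_rpow hr0.le (by norm_num : (0:ℝ) ≤ 2)]
        rw [← Real.rpow_natCast r (dim E - 1)]
        rw [div_eq_mul_inv, div_eq_mul_inv]
        rw [show (r : ℝ) ^ ((dim E - 1 : ℕ) : ℝ) * ((-a) * (r ^ (a-1) * ((2:ℝ) ^ (a-1))⁻¹))
          = (-a) * ((2:ℝ) ^ (a-1))⁻¹ * (r ^ ((dim E - 1 : ℕ) : ℝ) * r ^ (a-1)) from by ring]
        rw [← Real.rpow_add hr0]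
        congr 1
        rw [hdim]
        push_cast [Nat.cast_sub hn]
        simp only [ha_def]
        ring
      · rw [hf₂, Set.indicator_of_notMem hr, Set.indicator_of_notMem hr, mul_zero]
    rw [heq]
    apply Integrable.integrableOn
    apply IntegrableOn.integrable_indicator _ measurableSet_Ici
    have h1 : IntegrableOn (fun r : ℝ => r ^ (β - 2)) (Ioi (3:ℝ)) :=
      integrableOn_Ioi_rpow_of_lt (by linarith) (by norm_num)
    have h2 : IntegrableOn (fun r : ℝ => ((-a) / 2 ^ (a-1)) * r ^ (β - 2)) (Ici (3:ℝ)) := by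
      have : IntegrableOn (fun r : ℝ => ((-a) / 2 ^ (a-1)) * r ^ (β - 2)) (Ioi (3:ℝ)) :=
        h1.const_mul _
      rw [IntegrableOn, Measure.restrict_congr_set Ioi_ae_eq_Ici] at this
      exact this
    exact h2
  -- integrable radial majorants on E
  have hB : Integrable (fun x : E => f₁ ‖x‖) :=
    integrable_radial volume f₁ hf₁m hf₁0 hint₁
  have hT : Integrable (fun x : E => f₂ ‖x‖) :=
    integrable_radial volume f₂ hf₂m hf₂0 hint₂
  refine ⟨2 * (∫ x : E, f₁ ‖x‖) + ∫ x : E, f₂ ‖x‖, fun e he => ?_⟩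
  -- pointwise bound
  have hB_ge : ∀ x : E, ‖x‖ < 4 → ‖x‖ ^ a ≤ f₁ ‖x‖ := by
    intro x hx
    rcases eq_or_lt_of_le (norm_nonneg x) with h0 | h0
    · rw [← h0, Real.zero_rpow (ne_of_lt ha)]
      exact hf₁0 _
    · rw [hf₁]
      rw [Set.indicator_of_mem (Set.mem_Ioo.mpr ⟨h0, hx⟩)]
  have hpt : ∀ ω : E, |‖ω - e‖ ^ a - ‖ω‖ ^ a|
      ≤ f₁ ‖ω - e‖ + f₁ ‖ω‖ + f₂ ‖ω‖ := by
    intro ω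
    rcases lt_or_ge ‖ω‖ 3 with hω | hω
    · have h1 : ‖ω - e‖ < 4 := by
        calc ‖ω - e‖ ≤ ‖ω‖ + ‖e‖ := norm_sub_le _ _
          _ < 4 := by rw [he]; linarith
      have hA : (0:ℝ) ≤ ‖ω - e‖ ^ a := Real.rpow_nonneg (norm_nonneg _) a
      have hC : (0:ℝ) ≤ ‖ω‖ ^ a := Real.rpow_nonneg (norm_nonneg _) a
      calc |‖ω - e‖ ^ a - ‖ω‖ ^ a| ≤ |‖ω - e‖ ^ a| + |‖ω‖ ^ a| := abs_sub _ _
        _ = ‖ω - e‖ ^ a + ‖ω‖ ^ a := by rw [abs_of_nonneg hA, abs_of_nonneg hC]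
        _ ≤ f₁ ‖ω - e‖ + f₁ ‖ω‖ := add_le_add (hB_ge _ h1) (hB_ge _ (by linarith))
        _ ≤ f₁ ‖ω - e‖ + f₁ ‖ω‖ + f₂ ‖ω‖ := le_add_of_nonneg_right (hf₂0 _)
    · have hdist : |‖ω - e‖ - ‖ω‖| ≤ 1 := by
        have := abs_norm_sub_norm_le (ω - e) ω
        rwa [show ω - e - ω = -e from by abel, norm_neg, he] at this
      have hkey := aux_pair ha (by linarith : (2:ℝ) ≤ ‖ω‖) hdist
      have hf₂val : f₂ ‖ω‖ = (-a) * (‖ω‖/2) ^ (a-1) :=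
        Set.indicator_of_mem hω _
      calc |‖ω - e‖ ^ a - ‖ω‖ ^ a| ≤ (-a) * (‖ω‖/2) ^ (a-1) := hkey
        _ = f₂ ‖ω‖ := hf₂val.symm
        _ ≤ f₁ ‖ω - e‖ + f₁ ‖ω‖ + f₂ ‖ω‖ := by
            have := hf₁0 ‖ω - e‖; have := hf₁0 ‖ω‖; linarith
  -- integrability of the majorant and the main function
  have hBshift : Integrable (fun ω : E => f₁ ‖ω - e‖) := by
    have := hB.comp_sub_right e
    simpa using this
  have hG : Integrable (fun ω : E => f₁ ‖ω - e‖ + f₁ ‖ω‖ + f₂ ‖ω‖) :=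
    (hBshift.add hB).add hT
  have hFmeas : Measurable (fun ω : E => |‖ω - e‖ ^ a - ‖ω‖ ^ a|) :=
    (((measurable_id.sub_const e).norm.pow_const a).sub
      (measurable_norm.pow_const a)).abs
  have hF : Integrable (fun ω : E => |‖ω - e‖ ^ a - ‖ω‖ ^ a|) := by
    refine hG.mono' hFmeas.aestronglyMeasurable ?_
    refine Filter.Eventually.of_forall fun ω => ?_
    rw [Real.norm_eq_abs, abs_abs]
    exact hpt ω
  constructor
  · exact integrableOn_univ.mpr hF
  · calc (∫ ω : E, |‖ω - e‖ ^ a - ‖ω‖ ^ a|)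
        ≤ ∫ ω : E, (f₁ ‖ω - e‖ + f₁ ‖ω‖ + f₂ ‖ω‖) := integral_mono hF hG hpt
      _ = (∫ ω : E, f₁ ‖ω - e‖ + f₁ ‖ω‖) + ∫ x : E, f₂ ‖x‖ := by
          exact integral_add (hBshift.add hB) hT
      _ = ((∫ ω : E, f₁ ‖ω - e‖) + ∫ x : E, f₁ ‖x‖) + ∫ x : E, f₂ ‖x‖ := by
          exact congrArg (· + ∫ x : E, f₂ ‖x‖) (integral_add hBshift hB)
      _ = 2 * (∫ x : E, f₁ ‖x‖) + ∫ x : E, f₂ ‖x‖ := by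
          have h := integral_sub_right_eq_self (μ := (volume : Measure E))
            (fun ω : E => f₁ ‖ω‖) e
          rw [show (∫ ω : E, f₁ ‖ω - e‖) = ∫ ω : E, f₁ ‖ω‖ from h]
          ring
end
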